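/- (Converse direction used in the proof of Lemma 1.1: a contracting one-parameter subgroup forces triviality of the invariant ring.) Assume K is an infinite field. Suppose there exists λ : Fin r → ℤ such that ∑ j, w i j * λ j > 0 for every i : Fin m. Then every invariant polynomial is constant: every semi-invariant f ∈ MvPolynomial (Fin m) K of weight 0 satisfies f = MvPolynomial.C (MvPolynomial.coeff 0 f). -/

import Mathlib

lemma zpow_finset_sum {G : Type*} [CommGroup G] {ι : Type*} (c : G) (s : Finset ι) (g : ι → ℤ) :
    c ^ (∑ j ∈ s, g j) = ∏ j ∈ s, c ^ g j := by
  induction s using Finset.cons_induction with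
  | empty => simp
  | cons a s ha ih => rw [Finset.sum_cons, Finset.prod_cons, zpow_add, ih]

/-- (Converse direction used in the proof of Lemma 1.1.) Over an infinite field, if some
one-parameter subgroup pairs strictly positively with all the weights, then every
invariant polynomial is constant. -/
theorem invariants_constant_of_contracting_ops (K : Type*) [Field K] [Infinite K]
    (m r : ℕ) (hm : 0 < m) (hr : 0 < r) (w : Fin m → (Fin r → ℤ))
    (lam : Fin r → ℤ) (hlam : ∀ i : Fin m, (∑ j, w i j * lam j) > 0)
    (f : MvPolynomial (Fin m) K)
    (hf : ∀ (t : Fin r → Kˣ) (x : Fin m → K),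
      MvPolynomial.eval (fun i => ((∏ j, (t j) ^ (w i j) : Kˣ) : K) * x i) f
        = ((∏ j, (t j) ^ ((0 : Fin r → ℤ) j) : Kˣ) : K) * MvPolynomial.eval x f) :
    f = MvPolynomial.C (MvPolynomial.coeff 0 f) := by
  set n : Fin m → ℕ := fun i => (∑ j, w i j * lam j).toNat with hn
  have hn1 : ∀ i, 1 ≤ n i := by
    intro i
    have := hlam i
    simp only [hn]
    omega
  -- key invariance under the one-parameter subgroup
  have key : ∀ (c : Kˣ) (x : Fin m → K),
      MvPolynomial.eval (fun i => x i * (c : K) ^ n i) f = MvPolynomial.eval x f := by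
    intro c x
    have h := hf (fun j => c ^ lam j) x
    simp only [Pi.zero_apply, zpow_zero, Finset.prod_const_one, Units.val_one, one_mul] at h
    have hfun : (fun i => ((∏ j, (c ^ lam j) ^ (w i j) : Kˣ) : K) * x i)
        = fun i => x i * (c : K) ^ n i := by
      funext i
      have h1 : (∏ j, (c ^ lam j) ^ (w i j) : Kˣ) = c ^ (∑ j, w i j * lam j) := by
        rw [zpow_finset_sum]
        refine Finset.prod_congr rfl fun j _ => ?_
        rw [← zpow_mul, mul_comm]
      rw [h1, mul_comm]
      congr 1
      rw [Units.val_zpow_eq_zpow_val, ← Int.toNat_of_nonneg (le_of_lt (hlam i)),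
        zpow_natCast]
    rwa [hfun] at h
  -- conclude equality of polynomials via evaluation over the infinite field
  apply MvPolynomial.funext
  intro x
  rw [MvPolynomial.eval_C]
  -- single-variable polynomial p(T) = f(x i * T^(n i))
  set p : Polynomial K :=
    MvPolynomial.eval₂ (Polynomial.C) (fun i => Polynomial.C (x i) * Polynomial.X ^ n i) f
    with hp
  have hpc : ∀ c : K, Polynomial.eval c p
      = MvPolynomial.eval (fun i => x i * c ^ n i) f := by
    intro c
    rw [hp]
    rw [show Polynomial.eval c (MvPolynomial.eval₂ Polynomial.C
        (fun i => Polynomial.C (x i) * Polynomial.X ^ n i) f)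
      = (Polynomial.evalRingHom c) (MvPolynomial.eval₂ Polynomial.C
        (fun i => Polynomial.C (x i) * Polynomial.X ^ n i) f) from rfl]
    rw [MvPolynomial.eval₂_comp_left]
    have : (Polynomial.evalRingHom c).comp Polynomial.C = RingHom.id K := by
      ext a; simp
    rw [this]
    simp only [Function.comp_def, Polynomial.coe_evalRingHom, Polynomial.eval_mul,
      Polynomial.eval_pow, Polynomial.eval_C, Polynomial.eval_X]
    rfl
  have hconst : p = Polynomial.C (MvPolynomial.eval x f) := by
    apply Polynomial.eq_of_infinite_eval_eq
    apply Set.Infinite.mono (s := {c : K | c ≠ 0})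
    · intro c hc
      have : IsUnit c := isUnit_iff_ne_zero.mpr hc
      obtain ⟨u, rfl⟩ := this
      simp only [Set.mem_setOf_eq, Polynomial.eval_C]
      rw [hpc, key]
    · exact Set.Finite.infinite_compl (Set.finite_singleton (0 : K))
  have h0 := hpc 0
  rw [hconst, Polynomial.eval_C] at h0
  have hx0 : (fun i => x i * (0 : K) ^ n i) = (0 : Fin m → K) := by
    funext i
    simp [zero_pow (Nat.one_le_iff_ne_zero.mp (hn1 i))]
  rw [hx0] at h0
  rw [h0, MvPolynomial.eval_zero, MvPolynomial.constantCoeff_eq]
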